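/- Under the same assumptions as the Lipschitz-invariance result for the Bellman–Isaacs operator 𝒯 (𝔓⁰ compact, F̄ Lipschitz, r̄ bounded and Lipschitz, β ∈ [0, min(1, 1/(2C̄_F)))), 𝒯 is a β-contraction in the supremum norm on the set Lip_{b,L̄}(P(S);ℝ) of bounded L̄-Lipschitz functions: for all V̄¹, V̄² in this set, ‖𝒯V̄¹ − 𝒯V̄²‖_∞ ≤ β·‖V̄¹ − V̄²‖_∞. -/
import Mathlib


open MeasureTheory

/-- 1-Wasserstein distance between two (probability) measures on a metric measurable
space, defined as the infimum over all couplings of the mean distance. -/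
noncomputable def W1 {X : Type*} [MeasurableSpace X] [PseudoMetricSpace X]
    (μ ν : Measure X) : ℝ :=
  sInf {r : ℝ | ∃ γ : Measure (X × X), IsProbabilityMeasure γ ∧
    γ.map Prod.fst = μ ∧ γ.map Prod.snd = ν ∧ r = ∫ p, dist p.1 p.2 ∂γ}

/-- 1-Wasserstein distance on `P(S × A)` where `S × A` carries the sum metric
`d_{S×A}((s,a),(s',a')) = d_S(s,s') + d_A(a,a')`. -/
noncomputable def W1sum {S A : Type*} [MeasurableSpace S] [PseudoMetricSpace S]
    [MeasurableSpace A] [PseudoMetricSpace A] (Λ Λ' : Measure (S × A)) : ℝ :=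
  sInf {r : ℝ | ∃ γ : Measure ((S × A) × (S × A)), IsProbabilityMeasure γ ∧
    γ.map Prod.fst = Λ ∧ γ.map Prod.snd = Λ' ∧
    r = ∫ q, (dist q.1.1 q.2.1 + dist q.1.2 q.2.2) ∂γ}

/-- The Bellman–Isaacs operator
`(𝒯V̄)(μ) = sup_{Λ ∈ 𝔘(μ)} { r̄(μ,Λ) + β inf_{p ∈ 𝔓⁰} ∫ V̄(F̄(μ,Λ,e⁰)) dp(e⁰) }`,
where the inner integral is `∫ V̄ dp̄(·|μ,Λ,p)` for `p̄(·|μ,Λ,p)` the pushforward of `p`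
by `e⁰ ↦ F̄(μ,Λ,e⁰)`. -/
noncomputable def BellmanT {S A E0 : Type*}
    [MeasurableSpace S] [PseudoMetricSpace S] [MeasurableSpace A] [PseudoMetricSpace A]
    [MeasurableSpace E0]
    (P0 : Set (ProbabilityMeasure E0)) (β : ℝ)
    (rbar : ProbabilityMeasure S → ProbabilityMeasure (S × A) → ℝ)
    (Fbar : ProbabilityMeasure S → ProbabilityMeasure (S × A) → E0 → ProbabilityMeasure S)
    (V : ProbabilityMeasure S → ℝ) (μ : ProbabilityMeasure S) : ℝ :=
  ⨆ Λ : {Λ : ProbabilityMeasure (S × A) //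
      (Λ : Measure (S × A)).map Prod.fst = (μ : Measure S)},
    (rbar μ Λ.1 + β * ⨅ p : P0, ∫ e0, V (Fbar μ Λ.1 e0) ∂(p.1 : Measure E0))


section Helpers

open MeasureTheory

/-- `W1sum Λ Λ = 0` for a probability measure, via the diagonal coupling. -/
lemma W1sum_self {S A : Type*} [MeasurableSpace S] [PseudoMetricSpace S]
    [MeasurableSpace A] [PseudoMetricSpace A] [OpensMeasurableSpace S] [OpensMeasurableSpace A]
    [SecondCountableTopology S] [SecondCountableTopology A]
    (Λ : Measure (S × A)) [IsProbabilityMeasure Λ] : W1sum Λ Λ = 0 := by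
  have hdiag : Measurable (fun x : S × A => (x, x)) := measurable_id.prodMk measurable_id
  have hmem : (0 : ℝ) ∈ {r : ℝ | ∃ γ : Measure ((S × A) × (S × A)), IsProbabilityMeasure γ ∧
      γ.map Prod.fst = Λ ∧ γ.map Prod.snd = Λ ∧
      r = ∫ q, (dist q.1.1 q.2.1 + dist q.1.2 q.2.2) ∂γ} := by
    refine ⟨Λ.map (fun x => (x, x)), ?_, ?_, ?_, ?_⟩
    · exact Measure.isProbabilityMeasure_map hdiag.aemeasurable
    · rw [Measure.map_map measurable_fst hdiag,
        show (Prod.fst ∘ fun x : S × A => (x, x)) = id from rfl, Measure.map_id]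
    · rw [Measure.map_map measurable_snd hdiag,
        show (Prod.snd ∘ fun x : S × A => (x, x)) = id from rfl, Measure.map_id]
    · rw [integral_map hdiag.aemeasurable (Continuous.aestronglyMeasurable (by fun_prop))]
      simp
  refine le_antisymm (csInf_le ⟨0, ?_⟩ hmem) (le_csInf ⟨0, hmem⟩ ?_) <;>
  · rintro r ⟨γ, hγ, -, -, rfl⟩
    exact integral_nonneg fun q => by positivity

lemma abs_ciSup_sub_ciSup {ι : Type*} [Nonempty ι] {f g : ι → ℝ}
    (hf : BddAbove (Set.range f)) (hg : BddAbove (Set.range g)) {C : ℝ}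
    (h : ∀ i, |f i - g i| ≤ C) : |(⨆ i, f i) - ⨆ i, g i| ≤ C := by
  rw [abs_sub_le_iff]
  constructor
  · rw [sub_le_iff_le_add]
    refine ciSup_le fun i => ?_
    have h1 := (abs_le.1 (h i)).2
    have h2 := le_ciSup hg i
    linarith
  · rw [sub_le_iff_le_add]
    refine ciSup_le fun i => ?_
    have h1 := (abs_le.1 (h i)).1
    have h2 := le_ciSup hf i
    linarith

lemma abs_ciInf_sub_ciInf {ι : Type*} [Nonempty ι] {f g : ι → ℝ}
    (hf : BddBelow (Set.range f)) (hg : BddBelow (Set.range g)) {C : ℝ}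
    (h : ∀ i, |f i - g i| ≤ C) : |(⨅ i, f i) - ⨅ i, g i| ≤ C := by
  rw [abs_sub_le_iff]
  constructor
  · have hkey : (⨅ i, f i) - C ≤ ⨅ i, g i := le_ciInf fun i => by
      have h1 := ciInf_le hf i
      have h2 := (abs_le.1 (h i)).2
      linarith
    linarith
  · have hkey : (⨅ i, g i) - C ≤ ⨅ i, f i := le_ciInf fun i => by
      have h1 := ciInf_le hg i
      have h2 := (abs_le.1 (h i)).1
      linarith
    linarith

end Helpers

/-- the Bellman–Isaacs operator `𝒯` is a `β`-contraction in supremum norm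
on the set of bounded `L̄`-Lipschitz functions on `P(S)`:
`‖𝒯V̄¹ − 𝒯V̄²‖_∞ ≤ β ‖V̄¹ − V̄²‖_∞`. -/
theorem stmt_10 {S A E0 : Type*}
    [MetricSpace S] [CompactSpace S] [MeasurableSpace S] [BorelSpace S] [Nonempty S]
    [MetricSpace A] [CompactSpace A] [MeasurableSpace A] [BorelSpace A] [Nonempty A]
    [MetricSpace E0] [MeasurableSpace E0] [BorelSpace E0] [PolishSpace E0]
    (P0 : Set (ProbabilityMeasure E0)) (hP0ne : P0.Nonempty) (hP0cp : IsCompact P0)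
    (Fbar : ProbabilityMeasure S → ProbabilityMeasure (S × A) → E0 → ProbabilityMeasure S)
    (CF : ℝ) (hCF : 0 < CF)
    (hFlip : ∀ (μ μ' : ProbabilityMeasure S) (Λ Λ' : ProbabilityMeasure (S × A)) (e0 e0' : E0),
      (Λ : Measure (S × A)).map Prod.fst = (μ : Measure S) →
      (Λ' : Measure (S × A)).map Prod.fst = (μ' : Measure S) →
      W1 (Fbar μ Λ e0 : Measure S) (Fbar μ' Λ' e0' : Measure S) ≤
        CF * (2 * W1sum (Λ : Measure (S × A)) (Λ' : Measure (S × A)) + dist e0 e0'))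
    (rbar : ProbabilityMeasure S → ProbabilityMeasure (S × A) → ℝ)
    (Cr : ℝ) (hCr : 0 < Cr)
    (hrb : ∃ M, ∀ (μ : ProbabilityMeasure S) (Λ : ProbabilityMeasure (S × A)),
      (Λ : Measure (S × A)).map Prod.fst = (μ : Measure S) → |rbar μ Λ| ≤ M)
    (hrlip : ∀ (μ μ' : ProbabilityMeasure S) (Λ Λ' : ProbabilityMeasure (S × A)),
      (Λ : Measure (S × A)).map Prod.fst = (μ : Measure S) →
      (Λ' : Measure (S × A)).map Prod.fst = (μ' : Measure S) →
      |rbar μ Λ - rbar μ' Λ'| ≤ 2 * Cr * W1sum (Λ : Measure (S × A)) (Λ' : Measure (S × A)))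
    (β : ℝ) (hβ0 : 0 ≤ β) (hβ1 : β < min 1 (1 / (2 * CF)))
    (L : ℝ) (hLlb : 2 * Cr / (1 - 2 * β * CF) ≤ L)
    (V1 V2 : ProbabilityMeasure S → ℝ)
    (hV1b : ∃ M, ∀ μ, |V1 μ| ≤ M)
    (hV1lip : ∀ μ μ' : ProbabilityMeasure S,
      |V1 μ - V1 μ'| ≤ L * W1 (μ : Measure S) (μ' : Measure S))
    (hV2b : ∃ M, ∀ μ, |V2 μ| ≤ M)
    (hV2lip : ∀ μ μ' : ProbabilityMeasure S,
      |V2 μ - V2 μ'| ≤ L * W1 (μ : Measure S) (μ' : Measure S)) :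
    (⨆ μ : ProbabilityMeasure S, |BellmanT P0 β rbar Fbar V1 μ - BellmanT P0 β rbar Fbar V2 μ|)
      ≤ β * ⨆ μ : ProbabilityMeasure S, |V1 μ - V2 μ| := by
  
  classical
  obtain ⟨Mr, hMr⟩ := hrb
  obtain ⟨M1, hM1⟩ := hV1b
  obtain ⟨M2, hM2⟩ := hV2b
  obtain ⟨s0⟩ := (inferInstance : Nonempty S)
  obtain ⟨a0⟩ := (inferInstance : Nonempty A)
  have hne : Nonempty (ProbabilityMeasure S) := ⟨⟨Measure.dirac s0, inferInstance⟩⟩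
  have hneP0 : Nonempty P0 := hP0ne.to_subtype
  -- basic constants
  have h2βCF : 0 < 1 - 2 * β * CF := by
    have h := lt_of_lt_of_le hβ1 (min_le_right 1 (1 / (2 * CF)))
    have h2 : 0 < 2 * CF := by linarith
    rw [lt_div_iff₀ h2] at h
    nlinarith
  have hL : 0 < L := lt_of_lt_of_le (div_pos (by linarith) h2βCF) hLlb
  -- the sup norm of V1 - V2
  set D := ⨆ μ : ProbabilityMeasure S, |V1 μ - V2 μ| with hDdef
  have hbddD : BddAbove (Set.range fun μ : ProbabilityMeasure S => |V1 μ - V2 μ|) := by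
    refine ⟨M1 + M2, ?_⟩
    rintro x ⟨μ, rfl⟩
    calc |V1 μ - V2 μ| ≤ |V1 μ| + |V2 μ| := abs_sub _ _
      _ ≤ M1 + M2 := add_le_add (hM1 μ) (hM2 μ)
  have hDle : ∀ μ, |V1 μ - V2 μ| ≤ D := fun μ => le_ciSup hbddD μ
  -- bound for each μ
  refine ciSup_le fun μ => ?_
  -- the index type of admissible Λ is nonempty
  have hΛne : Nonempty {Λ : ProbabilityMeasure (S × A) //
      (Λ : Measure (S × A)).map Prod.fst = (μ : Measure S)} := by
    refine ⟨⟨⟨(μ : Measure S).prod (Measure.dirac a0), inferInstance⟩, ?_⟩⟩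
    simp [Measure.map_fst_prod]
  -- integrands: for a fixed admissible Λ
  have hint : ∀ (Λ : ProbabilityMeasure (S × A)),
      (Λ : Measure (S × A)).map Prod.fst = (μ : Measure S) →
      ∀ (V : ProbabilityMeasure S → ℝ) (MV : ℝ), (∀ ν, |V ν| ≤ MV) →
      (∀ ν ν' : ProbabilityMeasure S, |V ν - V ν'| ≤ L * W1 (ν : Measure S) (ν' : Measure S)) →
      ∀ p : P0, Integrable (fun e0 => V (Fbar μ Λ e0)) (p.1 : Measure E0) := by
    intro Λ hΛ V MV hVb hVlip p
    have hlip : ∀ e e' : E0, |V (Fbar μ Λ e) - V (Fbar μ Λ e')| ≤ (L * CF) * dist e e' := by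
      intro e e'
      have h1 := hVlip (Fbar μ Λ e) (Fbar μ Λ e')
      have h2 := hFlip μ μ Λ Λ e e' hΛ hΛ
      rw [W1sum_self] at h2
      calc |V (Fbar μ Λ e) - V (Fbar μ Λ e')|
          ≤ L * W1 (Fbar μ Λ e : Measure S) (Fbar μ Λ e' : Measure S) := h1
        _ ≤ L * (CF * (2 * 0 + dist e e')) := mul_le_mul_of_nonneg_left h2 hL.le
        _ = (L * CF) * dist e e' := by ring
    have hcont : Continuous (fun e0 => V (Fbar μ Λ e0)) := by
      refine (LipschitzWith.of_dist_le_mul (K := Real.toNNReal (L * CF)) fun e e' => ?_).continuous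
      rw [Real.dist_eq]
      calc |V (Fbar μ Λ e) - V (Fbar μ Λ e')| ≤ (L * CF) * dist e e' := hlip e e'
        _ ≤ (Real.toNNReal (L * CF) : ℝ) * dist e e' :=
            mul_le_mul_of_nonneg_right (Real.le_coe_toNNReal _) dist_nonneg
    exact ⟨hcont.aestronglyMeasurable,
      HasFiniteIntegral.of_bounded (C := MV) (Filter.Eventually.of_forall fun e0 => by
        simpa [Real.norm_eq_abs] using hVb (Fbar μ Λ e0))⟩
  -- integral bounds
  have hintb : ∀ (Λ : ProbabilityMeasure (S × A)) (V : ProbabilityMeasure S → ℝ) (MV : ℝ),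
      (∀ ν, |V ν| ≤ MV) →
      ∀ p : P0, |∫ e0, V (Fbar μ Λ e0) ∂(p.1 : Measure E0)| ≤ MV := by
    intro Λ V MV hVb p
    calc |∫ e0, V (Fbar μ Λ e0) ∂(p.1 : Measure E0)|
        = ‖∫ e0, V (Fbar μ Λ e0) ∂(p.1 : Measure E0)‖ := (Real.norm_eq_abs _).symm
      _ ≤ MV * ((p.1 : Measure E0) Set.univ).toReal :=
          norm_integral_le_of_norm_le_const (Filter.Eventually.of_forall fun e0 => by
            simpa [Real.norm_eq_abs] using hVb (Fbar μ Λ e0))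
      _ = MV := by simp
  -- the inner infima are within D of each other
  have hinf : ∀ (Λ : ProbabilityMeasure (S × A)),
      (Λ : Measure (S × A)).map Prod.fst = (μ : Measure S) →
      |(⨅ p : P0, ∫ e0, V1 (Fbar μ Λ e0) ∂(p.1 : Measure E0)) -
       (⨅ p : P0, ∫ e0, V2 (Fbar μ Λ e0) ∂(p.1 : Measure E0))| ≤ D := by
    intro Λ hΛ
    refine abs_ciInf_sub_ciInf ?_ ?_ ?_
    · exact ⟨-M1, by rintro x ⟨p, rfl⟩; have := abs_le.1 (hintb Λ V1 M1 hM1 p); linarith⟩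
    · exact ⟨-M2, by rintro x ⟨p, rfl⟩; have := abs_le.1 (hintb Λ V2 M2 hM2 p); linarith⟩
    · intro p
      rw [← integral_sub (hint Λ hΛ V1 M1 hM1 hV1lip p) (hint Λ hΛ V2 M2 hM2 hV2lip p)]
      calc |∫ e0, (V1 (Fbar μ Λ e0) - V2 (Fbar μ Λ e0)) ∂(p.1 : Measure E0)|
          = ‖∫ e0, (V1 (Fbar μ Λ e0) - V2 (Fbar μ Λ e0)) ∂(p.1 : Measure E0)‖ :=
            (Real.norm_eq_abs _).symm
        _ ≤ D * ((p.1 : Measure E0) Set.univ).toReal :=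
            norm_integral_le_of_norm_le_const (Filter.Eventually.of_forall fun e0 => by
              simpa [Real.norm_eq_abs] using hDle (Fbar μ Λ e0))
        _ = D := by simp
  -- bounds for the sup over Λ
  have hbdd : ∀ (V : ProbabilityMeasure S → ℝ) (MV : ℝ), (∀ ν, |V ν| ≤ MV) →
      BddAbove (Set.range fun Λ : {Λ : ProbabilityMeasure (S × A) //
        (Λ : Measure (S × A)).map Prod.fst = (μ : Measure S)} =>
        rbar μ Λ.1 + β * ⨅ p : P0, ∫ e0, V (Fbar μ Λ.1 e0) ∂(p.1 : Measure E0)) := by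
    intro V MV hVb
    refine ⟨Mr + β * MV, ?_⟩
    rintro x ⟨Λ, rfl⟩
    dsimp only
    have h1 : rbar μ Λ.1 ≤ Mr := (abs_le.1 (hMr μ Λ.1 Λ.2)).2
    have h2 : (⨅ p : P0, ∫ e0, V (Fbar μ Λ.1 e0) ∂(p.1 : Measure E0)) ≤ MV := by
      obtain ⟨p⟩ := hneP0
      refine le_trans (ciInf_le ⟨-MV, ?_⟩ p) (abs_le.1 (hintb Λ.1 V MV hVb p)).2
      rintro x ⟨q, rfl⟩
      have := abs_le.1 (hintb Λ.1 V MV hVb q); linarith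
    have := mul_le_mul_of_nonneg_left h2 hβ0
    linarith
  -- conclude for this μ
  have hβD : ∀ Λ : {Λ : ProbabilityMeasure (S × A) //
      (Λ : Measure (S × A)).map Prod.fst = (μ : Measure S)},
      |(rbar μ Λ.1 + β * ⨅ p : P0, ∫ e0, V1 (Fbar μ Λ.1 e0) ∂(p.1 : Measure E0)) -
       (rbar μ Λ.1 + β * ⨅ p : P0, ∫ e0, V2 (Fbar μ Λ.1 e0) ∂(p.1 : Measure E0))| ≤ β * D := by
    intro Λ
    have h := hinf Λ.1 Λ.2
    set X := ⨅ p : P0, ∫ e0, V1 (Fbar μ Λ.1 e0) ∂(p.1 : Measure E0) with hX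
    set Y := ⨅ p : P0, ∫ e0, V2 (Fbar μ Λ.1 e0) ∂(p.1 : Measure E0) with hY
    have heq : (rbar μ Λ.1 + β * X) - (rbar μ Λ.1 + β * Y) = β * (X - Y) := by ring
    rw [heq, abs_mul, abs_of_nonneg hβ0]
    exact mul_le_mul_of_nonneg_left h hβ0
  unfold BellmanT
  exact abs_ciSup_sub_ciSup (hbdd V1 M1 hM1) (hbdd V2 M2 hM2) hβD
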